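/- Let (T, A)_ω be a weighted knowledge base with T a DL-Lite_bool^H TBox, let k be an integer, and let I be an interpretation with ω(I) ≤ k. For every individual a ∈ Ind(A) and every (possibly inverse) role r, if ∃^{>k} r ∈ tp_A(a) (i.e., there are at least k+1 distinct individuals b with the assertion r(a,b) in A, reading r(a,b) as s(b,a) when r = s^-), then ∃s ∈ tp_I(a) for every role s with r ⊑_T s. -/
import Mathlib


namespace DL

/-! ### Syntax -/

abbrev IndName := ℕ
abbrev CName := ℕ
abbrev RName := ℕ

/-- Roles: role names and inverse roles. -/
inductive Role where
  | name : RName → Role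
  | inv  : RName → Role
deriving DecidableEq

/-- `ALCHIO` concepts. -/
inductive Concept where
  | top  : Concept
  | bot  : Concept
  | atom : CName → Concept
  | nom  : IndName → Concept
  | neg  : Concept → Concept
  | conj : Concept → Concept → Concept
  | ex   : Role → Concept → Concept
deriving DecidableEq

/-- TBox axioms: concept inclusions and role inclusions. -/
inductive Axiom where
  | ci : Concept → Concept → Axiom
  | ri : Role → Role → Axiom
deriving DecidableEq

/-- ABox assertions. -/
inductive Assertion where
  | ca : CName → IndName → Assertion
  | ra : RName → IndName → IndName → Assertion
deriving DecidableEq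

/-! ### Interpretations -/

/-- A DL interpretation with domain a subset of a universe `U`.  Individual names are
interpreted via `indI` (under the standard names assumption, the individual names of the
ABox under consideration are interpreted "as themselves", i.e. injectively). -/
structure Interp (U : Type) where
  dom : Set U
  indI : IndName → U
  cI : CName → Set U
  rI : RName → Set (U × U)
  cI_sub : ∀ A, cI A ⊆ dom
  rI_sub : ∀ r p, p ∈ rI r → p.1 ∈ dom ∧ p.2 ∈ dom

variable {U : Type}

/-- Every individual name denotes an element of the domain. -/
def Interp.Proper (I : Interp U) : Prop := ∀ a, I.indI a ∈ I.dom

def Role.interp (I : Interp U) : Role → Set (U × U)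
  | Role.name r => I.rI r
  | Role.inv r  => {p | (p.2, p.1) ∈ I.rI r}

def Concept.interp (I : Interp U) : Concept → Set U
  | Concept.top => I.dom
  | Concept.bot => ∅
  | Concept.atom A => I.cI A
  | Concept.nom a => {I.indI a} ∩ I.dom
  | Concept.neg C => I.dom \ Concept.interp I C
  | Concept.conj C D => Concept.interp I C ∩ Concept.interp I D
  | Concept.ex r C => {d | ∃ e, (d, e) ∈ Role.interp I r ∧ e ∈ Concept.interp I C}

def Assertion.sat (I : Interp U) : Assertion → Prop
  | Assertion.ca A a => I.indI a ∈ I.cI A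
  | Assertion.ra r a b => (I.indI a, I.indI b) ∈ I.rI r

/-! ### Violations and cost -/

/-- Violations of a concept inclusion `C ⊑ D`. -/
def vioCI (I : Interp U) (C D : Concept) : Set U :=
  Concept.interp I C \ Concept.interp I D

/-- Violations of a role inclusion `r ⊑ s`. -/
def vioRI (I : Interp U) (r s : Role) : Set (U × U) :=
  Role.interp I r \ Role.interp I s

/-- The number of violations of an axiom. -/
noncomputable def Axiom.vioCount (I : Interp U) : Axiom → ℕ∞
  | Axiom.ci C D => (vioCI I C D).encard
  | Axiom.ri r s => (vioRI I r s).encard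

open Classical in
/-- The cost of an interpretation w.r.t. a weighted knowledge base `(T, A)` with weight
functions `wT` (on TBox axioms) and `wA` (on ABox assertions). -/
noncomputable def cost (T : Finset Axiom) (A : Finset Assertion)
    (wT : Axiom → ℕ∞) (wA : Assertion → ℕ∞) (I : Interp U) : ℕ∞ :=
  (∑ τ ∈ T, wT τ * Axiom.vioCount I τ) +
    ∑ α ∈ A, (if Assertion.sat I α then 0 else wA α)

/-! ### Queries -/

inductive Term where
  | var : ℕ → Term
  | ind : IndName → Term
deriving DecidableEq

inductive QAtom where
  | ca : CName → Term → QAtom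
  | ra : RName → Term → Term → QAtom
deriving DecidableEq

/-- A Boolean conjunctive query: a finite set of atoms, all of whose variables are
(implicitly) existentially quantified. -/
abbrev BCQ := Finset QAtom

def Term.eval (I : Interp U) (π : ℕ → U) : Term → U
  | Term.var v => π v
  | Term.ind a => I.indI a

def QAtom.sat (I : Interp U) (π : ℕ → U) : QAtom → Prop
  | QAtom.ca A t => Term.eval I π t ∈ I.cI A
  | QAtom.ra r t t' => (Term.eval I π t, Term.eval I π t') ∈ I.rI r

/-- Satisfaction of a BCQ in an interpretation. -/
def satQ (I : Interp U) (q : BCQ) : Prop :=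
  ∃ π : ℕ → U, (∀ v, π v ∈ I.dom) ∧ ∀ a ∈ q, QAtom.sat I π a

/-- An instance query is a BCQ with a single atom. -/
def IsIQ (q : BCQ) : Prop := ∃ a : QAtom, q = {a}

/-! ### Cost-based semantics -/

/-- `k`-satisfiability: some interpretation has cost at most `k`. -/
def ksat (T : Finset Axiom) (A : Finset Assertion)
    (wT : Axiom → ℕ∞) (wA : Assertion → ℕ∞) (k : ℕ) : Prop :=
  ∃ (U : Type) (I : Interp U), I.Proper ∧ cost T A wT wA I ≤ (k : ℕ∞)

/-- `K ⊨ₚᵏ q`: some interpretation of cost at most `k` satisfies `q`. -/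
def satP (T : Finset Axiom) (A : Finset Assertion)
    (wT : Axiom → ℕ∞) (wA : Assertion → ℕ∞) (k : ℕ) (q : BCQ) : Prop :=
  ∃ (U : Type) (I : Interp U), I.Proper ∧ cost T A wT wA I ≤ (k : ℕ∞) ∧ satQ I q

/-- `K ⊨꜀ᵏ q`: every interpretation of cost at most `k` satisfies `q`. -/
def satC (T : Finset Axiom) (A : Finset Assertion)
    (wT : Axiom → ℕ∞) (wA : Assertion → ℕ∞) (k : ℕ) (q : BCQ) : Prop :=
  ∀ (U : Type) (I : Interp U), I.Proper → cost T A wT wA I ≤ (k : ℕ∞) → satQ I q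

/-- The optimal cost of a weighted knowledge base. -/
noncomputable def optCost (T : Finset Axiom) (A : Finset Assertion)
    (wT : Axiom → ℕ∞) (wA : Assertion → ℕ∞) : ℕ∞ :=
  sInf {c : ℕ∞ | ∃ (U : Type) (I : Interp U), I.Proper ∧ cost T A wT wA I = c}

/-- `K ⊨ₚᵒᵖᵗ q`: some interpretation of optimal cost satisfies `q`. -/
noncomputable def satPopt (T : Finset Axiom) (A : Finset Assertion)
    (wT : Axiom → ℕ∞) (wA : Assertion → ℕ∞) (q : BCQ) : Prop :=
  ∃ (U : Type) (I : Interp U), I.Proper ∧ cost T A wT wA I = optCost T A wT wA ∧ satQ I q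

/-- `K ⊨꜀ᵒᵖᵗ q`: every interpretation of optimal cost satisfies `q`. -/
noncomputable def satCopt (T : Finset Axiom) (A : Finset Assertion)
    (wT : Axiom → ℕ∞) (wA : Assertion → ℕ∞) (q : BCQ) : Prop :=
  ∀ (U : Type) (I : Interp U), I.Proper → cost T A wT wA I = optCost T A wT wA → satQ I q

/-! ### Occurrences of symbols -/

def Role.base : Role → RName
  | Role.name r => r
  | Role.inv r => r

def Concept.cnames : Concept → Finset CName
  | Concept.atom A => {A}
  | Concept.neg C => C.cnames
  | Concept.conj C D => C.cnames ∪ D.cnames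
  | Concept.ex _ C => C.cnames
  | _ => ∅

def Concept.rnames : Concept → Finset RName
  | Concept.neg C => C.rnames
  | Concept.conj C D => C.rnames ∪ D.rnames
  | Concept.ex r C => insert r.base C.rnames
  | _ => ∅

def Concept.indNames : Concept → Finset IndName
  | Concept.nom a => {a}
  | Concept.neg C => C.indNames
  | Concept.conj C D => C.indNames ∪ D.indNames
  | Concept.ex _ C => C.indNames
  | _ => ∅

def Axiom.cnames : Axiom → Finset CName
  | Axiom.ci C D => C.cnames ∪ D.cnames
  | Axiom.ri _ _ => ∅

def Axiom.rnames : Axiom → Finset RName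
  | Axiom.ci C D => C.rnames ∪ D.rnames
  | Axiom.ri r s => {r.base, s.base}

def Axiom.indNames : Axiom → Finset IndName
  | Axiom.ci C D => C.indNames ∪ D.indNames
  | Axiom.ri _ _ => ∅

def Assertion.cnames : Assertion → Finset CName
  | Assertion.ca A _ => {A}
  | Assertion.ra _ _ _ => ∅

def Assertion.rnames : Assertion → Finset RName
  | Assertion.ca _ _ => ∅
  | Assertion.ra r _ _ => {r}

def Assertion.indNames : Assertion → Finset IndName
  | Assertion.ca _ a => {a}
  | Assertion.ra _ a b => {a, b}

/-- The individual names occurring in an ABox. -/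
def aboxInds (A : Finset Assertion) : Finset IndName := A.biUnion Assertion.indNames

/-- The individual names occurring in a KB. -/
def kbInds (T : Finset Axiom) (A : Finset Assertion) : Finset IndName :=
  T.biUnion Axiom.indNames ∪ aboxInds A

def Term.indNames : Term → Finset IndName
  | Term.var _ => ∅
  | Term.ind a => {a}

def QAtom.indNames : QAtom → Finset IndName
  | QAtom.ca _ t => t.indNames
  | QAtom.ra _ t t' => t.indNames ∪ t'.indNames

def QAtom.cnames : QAtom → Finset CName
  | QAtom.ca A _ => {A}
  | QAtom.ra _ _ _ => ∅

def qInds (q : BCQ) : Finset IndName := q.biUnion QAtom.indNames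

def qCnames (q : BCQ) : Finset CName := q.biUnion QAtom.cnames

/-! ### Sizes -/

def Concept.size : Concept → ℕ
  | Concept.top => 1
  | Concept.bot => 1
  | Concept.atom _ => 1
  | Concept.nom _ => 1
  | Concept.neg C => C.size + 1
  | Concept.conj C D => C.size + D.size + 1
  | Concept.ex _ C => C.size + 2

def Axiom.size : Axiom → ℕ
  | Axiom.ci C D => C.size + D.size + 1
  | Axiom.ri _ _ => 3

def Assertion.size : Assertion → ℕ
  | Assertion.ca _ _ => 2
  | Assertion.ra _ _ _ => 3

def tboxSize (T : Finset Axiom) : ℕ := ∑ τ ∈ T, τ.size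

def aboxSize (A : Finset Assertion) : ℕ := ∑ α ∈ A, α.size

/-! ### DL-Lite fragments -/

/-- Basic concepts: concept names and unqualified existential restrictions `∃r` (with a
possibly inverse role `r`), the latter rendered as `∃r.⊤`. -/
inductive IsBasic : Concept → Prop
  | atom (A : CName) : IsBasic (Concept.atom A)
  | ex (r : Role) : IsBasic (Concept.ex r Concept.top)

/-- A `DL-Lite_core` axiom: `B ⊑ C` or `B ⊓ C ⊑ ⊥` with `B, C` basic concepts. -/
def IsCoreAxiom (τ : Axiom) : Prop :=
  (∃ B C, τ = Axiom.ci B C ∧ IsBasic B ∧ IsBasic C) ∨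
  (∃ B C, τ = Axiom.ci (Concept.conj B C) Concept.bot ∧ IsBasic B ∧ IsBasic C)

def IsDLLiteCore (T : Finset Axiom) : Prop := ∀ τ ∈ T, IsCoreAxiom τ

/-- Concepts built from basic concepts using `¬`, `⊓` (and hence also `⊔`). -/
inductive IsBoolConcept : Concept → Prop
  | basic {C} : IsBasic C → IsBoolConcept C
  | neg {C} : IsBoolConcept C → IsBoolConcept (Concept.neg C)
  | conj {C D} : IsBoolConcept C → IsBoolConcept D → IsBoolConcept (Concept.conj C D)

/-- A `DL-Lite_bool^H` axiom: a concept inclusion between Boolean combinations of basic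
concepts, or a role inclusion. -/
def IsBoolHAxiom (τ : Axiom) : Prop :=
  (∃ C D, τ = Axiom.ci C D ∧ IsBoolConcept C ∧ IsBoolConcept D) ∨ (∃ r s, τ = Axiom.ri r s)

def IsDLLiteBoolH (T : Finset Axiom) : Prop := ∀ τ ∈ T, IsBoolHAxiom τ

/-- The role assertion `ρ(a,b)`, read as `s(b,a)` when `ρ = s⁻`. -/
def roleAssert : Role → IndName → IndName → Assertion
  | Role.name r, a, b => Assertion.ra r a b
  | Role.inv r, a, b => Assertion.ra r b a

/-- `A ⊨ ∃^{>k} ρ` at `a`: there are at least `k+1` distinct individuals `b` with the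
assertion `ρ(a,b)` in `A`. -/
def manyInA (A : Finset Assertion) (k : ℕ) (ρ : Role) (a : IndName) : Prop :=
  ∃ B : Finset IndName, k + 1 ≤ B.card ∧ ∀ b ∈ B, roleAssert ρ a b ∈ A

/-- `r ⊑_T s`: the reflexive-transitive closure of the role inclusions of `T`. -/
def subRole (T : Finset Axiom) : Role → Role → Prop :=
  Relation.ReflTransGen fun ρ σ => Axiom.ri ρ σ ∈ T

lemma roleAssert_inj (ρ : Role) (a : IndName) : Function.Injective (roleAssert ρ a) := by
  cases ρ <;> intro b b' h <;> simpa [roleAssert, Assertion.ra.injEq] using h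

lemma mem_aboxInds_of_roleAssert {A : Finset Assertion} {ρ : Role} {a b : IndName}
    (h : roleAssert ρ a b ∈ A) : b ∈ aboxInds A := by
  cases ρ <;> exact Finset.mem_biUnion.2 ⟨_, h, by simp [roleAssert, Assertion.indNames]⟩

lemma sat_roleAssert {U : Type} (I : Interp U) (ρ : Role) (a b : IndName) :
    Assertion.sat I (roleAssert ρ a b) ↔ (I.indI a, I.indI b) ∈ Role.interp I ρ := by
  cases ρ <;> simp [roleAssert, Assertion.sat, Role.interp]

lemma chain_vio {U : Type} {I : Interp U} {T : Finset Axiom} {ρ σ : Role}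
    (h : subRole T ρ σ) {x y : U} (hx : (x, y) ∈ Role.interp I ρ) :
    (x, y) ∉ Role.interp I σ →
      ∃ r s, Axiom.ri r s ∈ T ∧ (x, y) ∈ vioRI I r s := by
  induction h with
  | refl => intro hy; exact absurd hx hy
  | @tail m c h₁ h₂ ih =>
      intro hy
      by_cases hm : (x, y) ∈ Role.interp I m
      · exact ⟨_, _, h₂, hm, hy⟩
      · exact ih hm

/-- Let `(T, A)_ω` be a `DL-Lite_bool^H` WKB and `I` an
interpretation (interpreting the ABox individuals as themselves, i.e. injectively) with
`ω(I) ≤ k`.  For every individual `a` and role `r`: if `∃^{>k} r ∈ tp_A(a)`, then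
`∃s ∈ tp_I(a)` for every role `s` with `r ⊑_T s`. -/
theorem statement16 (T : Finset Axiom) (hT : IsDLLiteBoolH T)
    (A : Finset Assertion) (wT : Axiom → ℕ∞) (wA : Assertion → ℕ∞)
    (hwT : ∀ τ ∈ T, 1 ≤ wT τ) (hwA : ∀ α ∈ A, 1 ≤ wA α)
    (k : ℕ) {U : Type} (I : Interp U) (hP : I.Proper)
    (hinj : Set.InjOn I.indI ↑(aboxInds A))
    (hcost : cost T A wT wA I ≤ (k : ℕ∞))
    (a : IndName) (ρ : Role) (hmany : manyInA A k ρ a)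
    (σ : Role) (hsub : subRole T ρ σ) :
    I.indI a ∈ Concept.interp I (Concept.ex σ Concept.top) := by
  classical
  by_contra hgoal
  obtain ⟨B, hBcard, hB⟩ := hmany
  have hnot : ∀ b : IndName, (I.indI a, I.indI b) ∉ Role.interp I σ := by
    intro b hb
    exact hgoal ⟨I.indI b, hb, hP b⟩
  have hBabox : ∀ b ∈ B, b ∈ aboxInds A := fun b hb =>
    mem_aboxInds_of_roleAssert (hB b hb)
  -- injectivity of the pair map on B
  have hpairinj : ∀ s : Finset IndName, s ⊆ B →
      Set.InjOn (fun b => (I.indI a, I.indI b)) ↑s := by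
    intro s hs b hb b' hb' h
    have : I.indI b = I.indI b' := by simpa using congrArg Prod.snd h
    exact hinj (hBabox b (hs hb)) (hBabox b' (hs hb')) this
  set B1 := B.filter (fun b => ¬ Assertion.sat I (roleAssert ρ a b)) with hB1def
  set B2 := B.filter (fun b => Assertion.sat I (roleAssert ρ a b)) with hB2def
  -- each b in B2 yields a violated role inclusion
  have hchoice : ∀ b ∈ B2, ∃ rs : Role × Role,
      Axiom.ri rs.1 rs.2 ∈ T ∧ (I.indI a, I.indI b) ∈ vioRI I rs.1 rs.2 := by
    intro b hb
    have hsat := (Finset.mem_filter.1 hb).2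
    have hx : (I.indI a, I.indI b) ∈ Role.interp I ρ := (sat_roleAssert I ρ a b).1 hsat
    obtain ⟨r, s, hrs, hv⟩ := chain_vio hsub hx (hnot b)
    exact ⟨(r, s), hrs, hv⟩
  letI : Inhabited (Role × Role) := ⟨(Role.name 0, Role.name 0)⟩
  choose! f hfT hfv using hchoice
  -- bound on the TBox part by |B2|
  have hfiber : ∀ τ ∈ T,
      ((B2.filter (fun b => Axiom.ri (f b).1 (f b).2 = τ)).card : ℕ∞) ≤
        Axiom.vioCount I τ := by
    intro τ hτ
    set F := B2.filter (fun b => Axiom.ri (f b).1 (f b).2 = τ) with hF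
    rcases F.eq_empty_or_nonempty with he | ⟨b₀, hb₀⟩
    · simp [he]
    · have hb₀τ : Axiom.ri (f b₀).1 (f b₀).2 = τ := (Finset.mem_filter.1 hb₀).2
      have himg : ↑(F.image (fun b => (I.indI a, I.indI b))) ⊆
          vioRI I (f b₀).1 (f b₀).2 := by
        intro p hp
        simp only [Finset.coe_image, Set.mem_image, Finset.mem_coe] at hp
        obtain ⟨b, hbF, rfl⟩ := hp
        have hbτ : Axiom.ri (f b).1 (f b).2 = τ := (Finset.mem_filter.1 hbF).2
        have heq := hbτ.trans hb₀τ.symm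
        have h1 : (f b).1 = (f b₀).1 := by
          injection heq
        have h2 : (f b).2 = (f b₀).2 := by
          injection heq
        have := hfv b (Finset.mem_filter.1 hbF).1
        rwa [h1, h2] at this
      have hsubB : F ⊆ B := fun b hb =>
        (Finset.mem_filter.1 (Finset.mem_filter.1 hb).1).1
      have hcard : F.card = (F.image (fun b => (I.indI a, I.indI b))).card :=
        (Finset.card_image_of_injOn (hpairinj F hsubB)).symm
      calc (F.card : ℕ∞) = ((F.image (fun b => (I.indI a, I.indI b)) : Finset _) :
              Set (U × U)).encard := by
            rw [Set.encard_coe_eq_coe_finsetCard, hcard]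
        _ ≤ (vioRI I (f b₀).1 (f b₀).2).encard := Set.encard_le_encard himg
        _ = Axiom.vioCount I τ := by rw [← hb₀τ]; rfl
  have hB2T : (B2.card : ℕ∞) ≤ ∑ τ ∈ T, wT τ * Axiom.vioCount I τ := by
    have hmaps : ∀ b ∈ B2, Axiom.ri (f b).1 (f b).2 ∈ T := hfT
    have hcardeq := Finset.card_eq_sum_card_fiberwise hmaps
    calc (B2.card : ℕ∞)
        = ∑ τ ∈ T, ((B2.filter (fun b => Axiom.ri (f b).1 (f b).2 = τ)).card : ℕ∞) := by
          rw [hcardeq]; push_cast; rfl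
      _ ≤ ∑ τ ∈ T, Axiom.vioCount I τ := Finset.sum_le_sum hfiber
      _ ≤ ∑ τ ∈ T, wT τ * Axiom.vioCount I τ := by
          refine Finset.sum_le_sum fun τ hτ => ?_
          calc Axiom.vioCount I τ = 1 * Axiom.vioCount I τ := (one_mul _).symm
            _ ≤ wT τ * Axiom.vioCount I τ := mul_le_mul_left (hwT τ hτ) _
  -- bound on the ABox part by |B1|
  have hB1A : (B1.card : ℕ∞) ≤
      ∑ α ∈ A, (if Assertion.sat I α then 0 else wA α) := by
    set V1 := B1.image (roleAssert ρ a) with hV1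
    have hV1sub : V1 ⊆ A := by
      intro α hα
      obtain ⟨b, hb, rfl⟩ := Finset.mem_image.1 hα
      exact hB b (Finset.mem_filter.1 hb).1
    have hV1card : V1.card = B1.card :=
      Finset.card_image_of_injective _ (roleAssert_inj ρ a)
    calc (B1.card : ℕ∞) = ∑ _α ∈ V1, (1 : ℕ∞) := by
          rw [Finset.sum_const, hV1card]; simp [mul_comm]
      _ ≤ ∑ α ∈ V1, (if Assertion.sat I α then 0 else wA α) := by
          refine Finset.sum_le_sum fun α hα => ?_
          obtain ⟨b, hb, rfl⟩ := Finset.mem_image.1 hα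
          have hns := (Finset.mem_filter.1 hb).2
          rw [if_neg hns]
          exact hwA _ (hV1sub hα)
      _ ≤ ∑ α ∈ A, (if Assertion.sat I α then 0 else wA α) :=
          Finset.sum_le_sum_of_subset hV1sub
  -- combine
  have hsplit : B2.card + B1.card = B.card := by
    rw [hB1def, hB2def]
    exact Finset.card_filter_add_card_filter_not
      (p := fun b => Assertion.sat I (roleAssert ρ a b))
  have hfinal : ((k + 1 : ℕ) : ℕ∞) ≤ (k : ℕ∞) := by
    calc ((k + 1 : ℕ) : ℕ∞) ≤ (B.card : ℕ∞) := by exact_mod_cast hBcard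
      _ = (B2.card : ℕ∞) + (B1.card : ℕ∞) := by
          rw [← hsplit]; push_cast; ring
      _ ≤ (∑ τ ∈ T, wT τ * Axiom.vioCount I τ) +
            ∑ α ∈ A, (if Assertion.sat I α then 0 else wA α) :=
          add_le_add hB2T hB1A
      _ = cost T A wT wA I := rfl
      _ ≤ (k : ℕ∞) := hcost
  have : k + 1 ≤ k := by exact_mod_cast hfinal
  omega

end DL
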